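/- There exists a unique α ∈ (0, 1/2) satisfying 1.5·h(α) = h(α) + 0.75·(1−α) (equivalently h(α) = 1.5·(1−α)), and it satisfies α < 0.36751; consequently 1.5·h(α) < 1.42312. -/
import Mathlib


noncomputable def binEntropy (x : ℝ) : ℝ :=
  -x * Real.logb 2 x - (1 - x) * Real.logb 2 (1 - x)

private noncomputable def fAux (x : ℝ) : ℝ :=
  -x * Real.log x - (1 - x) * Real.log (1 - x) - 1.5 * (1 - x) * Real.log 2

private lemma log_one_sub_lb {x A : ℝ} (n : ℕ) (h0 : 0 ≤ x) (h1 : x < 1)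
    (hA : A ≤ -(∑ i ∈ Finset.range n, x ^ (i + 1) / (i + 1)) - x ^ (n + 1) / (1 - x)) :
    A ≤ Real.log (1 - x) := by
  have h := Real.abs_log_sub_add_sum_range_le (by rwa [abs_of_nonneg h0]) n
  rw [abs_of_nonneg h0] at h
  have h' := abs_le.1 h
  linarith [h'.1, h'.2]

private lemma log_one_sub_ub {x B : ℝ} (n : ℕ) (h0 : 0 ≤ x) (h1 : x < 1)
    (hB : -(∑ i ∈ Finset.range n, x ^ (i + 1) / (i + 1)) + x ^ (n + 1) / (1 - x) ≤ B) :
    Real.log (1 - x) ≤ B := by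
  have h := Real.abs_log_sub_add_sum_range_le (by rwa [abs_of_nonneg h0]) n
  rw [abs_of_nonneg h0] at h
  have h' := abs_le.1 h
  linarith [h'.1, h'.2]

private lemma fAux_eq (x : ℝ) : fAux x = Real.binEntropy x - 1.5 * (1 - x) * Real.log 2 := by
  unfold fAux Real.binEntropy
  rw [Real.log_inv, Real.log_inv]
  ring

private lemma fAux_strictMono : StrictMonoOn fAux (Set.Icc (0 : ℝ) (1 / 2)) := by
  intro a ha b hb hab
  have h2 : (0 : ℝ) < Real.log 2 := Real.log_pos (by norm_num)
  have hmono := Real.binEntropy_strictMonoOn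
    (by simpa using ha) (by simpa using hb) hab
  rw [fAux_eq, fAux_eq]
  nlinarith

private lemma hAu : (-0.3078767 : ℝ) ≤ Real.log (1 - 132497 / 500000) := by
  apply log_one_sub_lb 16 (by norm_num) (by norm_num)
  simp only [Finset.sum_range_succ, Finset.sum_range_zero]
  norm_num

private lemma hAv : (-0.4580799 : ℝ) ≤ Real.log (1 - 367503 / 1000000) := by
  apply log_one_sub_lb 16 (by norm_num) (by norm_num)
  simp only [Finset.sum_range_succ, Finset.sum_range_zero]
  norm_num

private lemma hBu : Real.log (1 - 13249 / 50000) ≤ (-0.3078575 : ℝ) := by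
  apply log_one_sub_ub 16 (by norm_num) (by norm_num)
  simp only [Finset.sum_range_succ, Finset.sum_range_zero]
  norm_num

private lemma hBv : Real.log (1 - 36751 / 100000) ≤ (-0.45809079 : ℝ) := by
  apply log_one_sub_ub 16 (by norm_num) (by norm_num)
  simp only [Finset.sum_range_succ, Finset.sum_range_zero]
  norm_num

private lemma fAux_p_neg : fAux (367503 / 1000000) < 0 := by
  have hlp : Real.log (367503 / 1000000 : ℝ)
      = Real.log (1 - 132497 / 500000) - Real.log 2 := by
    have : (1 : ℝ) - 132497 / 500000 = 2 * (367503 / 1000000) := by norm_num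
    rw [this, Real.log_mul (by norm_num) (by norm_num)]
    ring
  have hq : (1 : ℝ) - 367503 / 1000000 = 1 - 367503 / 1000000 := rfl
  have h2 : (0.6931471803 : ℝ) < Real.log 2 := Real.log_two_gt_d9
  unfold fAux
  rw [hlp]
  nlinarith [hAu, hAv]

private lemma fAux_x2_pos : 0 < fAux (36751 / 100000) := by
  have hlp : Real.log (36751 / 100000 : ℝ)
      = Real.log (1 - 13249 / 50000) - Real.log 2 := by
    have : (1 : ℝ) - 13249 / 50000 = 2 * (36751 / 100000) := by norm_num
    rw [this, Real.log_mul (by norm_num) (by norm_num)]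
    ring
  have h2 : Real.log 2 < (0.6931471808 : ℝ) := Real.log_two_lt_d9
  unfold fAux
  rw [hlp]
  nlinarith [hBu, hBv]

private lemma key_iff (β : ℝ) :
    (1.5 * binEntropy β = binEntropy β + 0.75 * (1 - β)) ↔ fAux β = 0 := by
  have hL : (0 : ℝ) < Real.log 2 := Real.log_pos (by norm_num)
  have e1 : binEntropy β
      = (-β * Real.log β - (1 - β) * Real.log (1 - β)) / Real.log 2 := by
    unfold binEntropy
    rw [Real.logb, Real.logb]
    ring
  set A := -β * Real.log β - (1 - β) * Real.log (1 - β) with hA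
  have hfa : fAux β = A - 1.5 * (1 - β) * Real.log 2 := by unfold fAux; rw [hA]
  rw [e1, hfa]
  constructor
  · intro h
    have hX : A = (A / Real.log 2) * Real.log 2 := (div_mul_cancel₀ A hL.ne').symm
    have hXe : A / Real.log 2 = 1.5 * (1 - β) := by linarith
    rw [hX, hXe]
    ring
  · intro h
    have hA2 : A = 1.5 * (1 - β) * Real.log 2 := by linarith
    rw [hA2]
    field_simp
    ring

theorem stmt_19 :
    ∃ α : ℝ, (α ∈ Set.Ioo (0 : ℝ) (1 / 2) ∧
        1.5 * binEntropy α = binEntropy α + 0.75 * (1 - α)) ∧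
      (∀ β : ℝ, β ∈ Set.Ioo (0 : ℝ) (1 / 2) →
        1.5 * binEntropy β = binEntropy β + 0.75 * (1 - β) → β = α) ∧
      α < 0.36751 ∧ 1.5 * binEntropy α < 1.42312 := by
  have hcont : ContinuousOn fAux (Set.Icc (367503 / 1000000 : ℝ) (36751 / 100000)) := by
    have : Continuous fAux := by
      have : fAux = fun x => Real.binEntropy x - 1.5 * (1 - x) * Real.log 2 :=
        funext fAux_eq
      rw [this]
      fun_prop
    exact this.continuousOn
  have hle : (367503 / 1000000 : ℝ) ≤ 36751 / 100000 := by norm_num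
  have hIoo : (0 : ℝ) ∈ Set.Ioo (fAux (367503 / 1000000)) (fAux (36751 / 100000)) :=
    ⟨fAux_p_neg, fAux_x2_pos⟩
  obtain ⟨α, hαmem, hfα⟩ := intermediate_value_Ioo hle hcont hIoo
  have hα1 : (367503 / 1000000 : ℝ) < α := hαmem.1
  have hα2 : α < 36751 / 100000 := hαmem.2
  have hαIoo : α ∈ Set.Ioo (0 : ℝ) (1 / 2) := ⟨by linarith, by linarith⟩
  refine ⟨α, ⟨hαIoo, (key_iff α).2 hfα⟩, ?_, by norm_num at hα2 ⊢; linarith, ?_⟩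
  · intro β hβ heq
    have hfβ : fAux β = 0 := (key_iff β).1 heq
    have hsub : Set.Ioo (0 : ℝ) (1 / 2) ⊆ Set.Icc (0 : ℝ) (1 / 2) := Set.Ioo_subset_Icc_self
    exact fAux_strictMono.injOn (hsub hβ) (hsub hαIoo) (by rw [hfβ, hfα])
  · have heq : 1.5 * binEntropy α = binEntropy α + 0.75 * (1 - α) := (key_iff α).2 hfα
    have hbe : binEntropy α = 1.5 * (1 - α) := by linarith
    rw [heq, hbe]
    norm_num
    linarith
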